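/- Let (X_t) be a continuous-time simple symmetric random walk on ℤ with generator (1/2)Δ, where Δf(x) = Σ_{|y-x|=1}(f(y)-f(x)). For every λ ≥ 0 and T > 0 there exists a constant c(λ,T) > 0 such that for all n ∈ ℕ, k ∈ ℤ, and t ∈ [0,T], E[exp(-λ|X_{n²t} + k|/n)] ≥ c(λ,T) exp(-λ|k|/n). -/

import Mathlib

open MeasureTheory Set

/-- Number of nearest-neighbour paths of length `m` on `ℤ` from `0` to `x`. -/
def pathCount (m : ℕ) (x : ℤ) : ℕ :=
  if ((m : ℤ) + x) % 2 = 0 ∧ x.natAbs ≤ m then Nat.choose m (((m : ℤ) + x).toNat / 2) else 0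

/-- Transition kernel of the rate-1 continuous-time simple symmetric random walk on `ℤ`
(generator `(1/2)Δ`): `^dp_t(x) = P₀(X_t = x) = e^{-t} Σ_m (t^m/m!) P(S_m = x)`. -/
noncomputable def srwKernel (t : ℝ) (x : ℤ) : ℝ :=
  Real.exp (-t) * ∑' m : ℕ, t ^ m / (m.factorial : ℝ) * (pathCount m x : ℝ) / 2 ^ m

lemma pathCount_apply (m j : ℕ) (hj : j ≤ m) :
    pathCount m (2 * (j : ℤ) - m) = m.choose j := by
  unfold pathCount
  rw [if_pos (by constructor <;> omega)]
  congr 1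
  omega

lemma pathCount_eq_zero {m : ℕ} {x : ℤ}
    (h : ∀ j ∈ Finset.range (m + 1), 2 * (j : ℤ) - m ≠ x) : pathCount m x = 0 := by
  unfold pathCount
  rw [if_neg]
  rintro ⟨h1, h2⟩
  exact h (((m : ℤ) + x).toNat / 2) (by simp only [Finset.mem_range]; omega) (by omega)

lemma summable_pathCount_mul (m : ℕ) (f : ℤ → ℝ) :
    Summable fun x : ℤ => (pathCount m x : ℝ) * f x := by
  apply summable_of_ne_finset_zero (s := (Finset.range (m + 1)).image fun j : ℕ => 2 * (j : ℤ) - m)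
  intro x hx
  have : pathCount m x = 0 := by
    apply pathCount_eq_zero
    intro j hj hne
    exact hx (Finset.mem_image.mpr ⟨j, hj, hne⟩)
  simp [this]

noncomputable def bsum (m : ℕ) (f : ℤ → ℝ) : ℝ :=
  ∑ j ∈ Finset.range (m + 1), (m.choose j : ℝ) * f (2 * (j : ℤ) - m)

lemma tsum_pathCount_mul (m : ℕ) (f : ℤ → ℝ) :
    ∑' x : ℤ, (pathCount m x : ℝ) * f x = bsum m f := by
  rw [tsum_eq_sum (s := (Finset.range (m + 1)).image fun j : ℕ => 2 * (j : ℤ) - m)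
    (by
      intro x hx
      have : pathCount m x = 0 := by
        apply pathCount_eq_zero
        intro j hj hne
        exact hx (Finset.mem_image.mpr ⟨j, hj, hne⟩)
      simp [this])]
  rw [Finset.sum_image (by intro a _ b _ hab; have h' : 2 * (a : ℤ) - m = 2 * (b : ℤ) - m := hab; omega)]
  apply Finset.sum_congr rfl
  intro j hj
  rw [pathCount_apply m j (by simpa using Nat.lt_succ_iff.mp (Finset.mem_range.mp hj))]

lemma bsum_one (m : ℕ) : bsum m (fun _ => 1) = 2 ^ m := by
  unfold bsum
  simp only [mul_one]
  rw [← Nat.cast_sum, Nat.sum_range_choose]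
  push_cast; ring

lemma choose_sum_succ (m : ℕ) (g : ℕ → ℝ) :
    ∑ j ∈ Finset.range (m + 2), ((m + 1).choose j : ℝ) * g j
      = ∑ j ∈ Finset.range (m + 1), (m.choose j : ℝ) * (g j + g (j + 1)) := by
  rw [Finset.sum_range_succ' _ (m + 1)]
  have h1 : ∀ j, ((m + 1).choose (j + 1) : ℝ) = m.choose j + m.choose (j + 1) := by
    intro j; rw [Nat.choose_succ_succ]; push_cast; ring
  simp only [h1, add_mul, Finset.sum_add_distrib]
  have h2 : ∑ j ∈ Finset.range (m + 1), (m.choose (j + 1) : ℝ) * g (j + 1)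
      = ∑ j ∈ Finset.range (m + 1), (m.choose j : ℝ) * g j - (m.choose 0 : ℝ) * g 0 := by
    have := Finset.sum_range_succ' (fun j => (m.choose j : ℝ) * g j) (m + 1)
    rw [Finset.sum_range_succ] at this
    simp only [Nat.choose_succ_self, Nat.cast_zero, zero_mul, add_zero] at this
    linarith [this]
  rw [h2]
  simp only [Nat.choose_zero_right, Nat.cast_one, one_mul, mul_add, Finset.sum_add_distrib]
  ring

lemma bsum_sq (m : ℕ) : bsum m (fun x : ℤ => ((x : ℝ)) ^ 2) = m * 2 ^ m := by
  induction m with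
  | zero => simp [bsum]
  | succ m ih =>
    unfold bsum at *
    have key := choose_sum_succ m (fun j => ((2 * (j : ℤ) - (m + 1) : ℤ) : ℝ) ^ 2)
    push_cast at key ⊢
    rw [key]
    have : ∀ j ∈ Finset.range (m + 1), (m.choose j : ℝ) *
        ((2 * (j : ℝ) - (m + 1)) ^ 2 + (2 * ((j : ℝ) + 1) - (m + 1)) ^ 2)
        = 2 * ((m.choose j : ℝ) * (2 * (j : ℝ) - m) ^ 2) + 2 * (m.choose j : ℝ) := by
      intro j _; ring
    rw [Finset.sum_congr rfl this, Finset.sum_add_distrib, ← Finset.mul_sum, ← Finset.mul_sum]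
    push_cast at ih
    rw [ih, ← Nat.cast_sum, Nat.sum_range_choose]
    push_cast; ring

lemma bsum_nonneg (m : ℕ) {f : ℤ → ℝ} (hf : ∀ x, 0 ≤ f x) : 0 ≤ bsum m f :=
  Finset.sum_nonneg fun j _ => mul_nonneg (Nat.cast_nonneg _) (hf _)

lemma bsum_le_two_pow (m : ℕ) {f : ℤ → ℝ} (hf : ∀ x, f x ≤ 1) : bsum m f ≤ 2 ^ m := by
  rw [← bsum_one m]
  exact Finset.sum_le_sum fun j _ =>
    mul_le_mul_of_nonneg_left (hf _) (Nat.cast_nonneg _)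

lemma srw_fubini (s : ℝ) (hs : 0 ≤ s) (g : ℤ → ℝ) (hg : ∀ x, 0 ≤ g x)
    (hb : Summable fun m : ℕ => s ^ m / (m.factorial : ℝ) / 2 ^ m * bsum m g) :
    Summable (fun x : ℤ => srwKernel s x * g x) ∧
    ∑' x : ℤ, srwKernel s x * g x
      = Real.exp (-s) * ∑' m : ℕ, s ^ m / (m.factorial : ℝ) / 2 ^ m * bsum m g := by
  set F : ℕ × ℤ → ℝ := fun p =>
    s ^ p.1 / (p.1.factorial : ℝ) / 2 ^ p.1 * ((pathCount p.1 p.2 : ℝ) * g p.2) with hFdef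
  have hc : ∀ m : ℕ, (0:ℝ) ≤ s ^ m / (m.factorial : ℝ) / 2 ^ m := by
    intro m
    positivity
  have hF0 : 0 ≤ F := by
    intro p
    exact mul_nonneg (hc p.1) (mul_nonneg (Nat.cast_nonneg _) (hg p.2))
  have hFx : ∀ m : ℕ, Summable fun x : ℤ => F (m, x) := by
    intro m
    simp only [hFdef]
    exact (summable_pathCount_mul m g).mul_left _
  have htsum_x : ∀ m : ℕ, ∑' x : ℤ, F (m, x) = s ^ m / (m.factorial : ℝ) / 2 ^ m * bsum m g := by
    intro m
    simp only [hFdef]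
    rw [tsum_mul_left, tsum_pathCount_mul]
  have hsum1 : Summable fun m : ℕ => ∑' x : ℤ, F (m, x) := by
    apply (summable_congr htsum_x).mpr hb
  have hF : Summable F := (summable_prod_of_nonneg hF0).mpr ⟨hFx, hsum1⟩
  have hswap : Summable (fun q : ℤ × ℕ => F (q.2, q.1)) := hF.prod_symm
  have hxm := (summable_prod_of_nonneg (f := fun q : ℤ × ℕ => F (q.2, q.1))
    (fun q => hF0 _)).mp hswap
  have hker : ∀ x : ℤ, srwKernel s x * g x = Real.exp (-s) * ∑' m : ℕ, F (m, x) := by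
    intro x
    unfold srwKernel
    rw [mul_assoc, ← tsum_mul_right]
    congr 1
    apply tsum_congr
    intro m
    simp only [hFdef]
    ring
  constructor
  · apply (summable_congr hker).mpr
    exact hxm.2.mul_left _
  · rw [tsum_congr hker, tsum_mul_left]
    congr 1
    have e1 : ∑' (x : ℤ) (m : ℕ), F (m, x) = ∑' q : ℤ × ℕ, F (q.2, q.1) :=
      (Summable.tsum_prod' hswap hxm.1).symm
    have e2 : ∑' q : ℤ × ℕ, F (q.2, q.1) = ∑' p : ℕ × ℤ, F p :=
      (Equiv.prodComm ℤ ℕ).tsum_eq F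
    have e3 : ∑' p : ℕ × ℤ, F p = ∑' (m : ℕ) (x : ℤ), F (m, x) := Summable.tsum_prod' hF hFx
    rw [e1, e2, e3]
    exact tsum_congr htsum_x

lemma tsum_exp_series (s : ℝ) : ∑' m : ℕ, s ^ m / (m.factorial : ℝ) = Real.exp s := by
  rw [Real.exp_eq_exp_ℝ, NormedSpace.exp_eq_tsum_div]

lemma summable_mul_pow_div_factorial (s : ℝ) :
    Summable fun m : ℕ => (m : ℝ) * (s ^ m / (m.factorial : ℝ)) := by
  apply (summable_nat_add_iff 1).mp
  have heq : (fun m : ℕ => ((m + 1 : ℕ) : ℝ) * (s ^ (m + 1) / ((m + 1).factorial : ℝ)))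
      = fun m : ℕ => s * (s ^ m / (m.factorial : ℝ)) := by
    funext m
    have hfac : ((m.factorial : ℝ)) ≠ 0 := by
      exact_mod_cast (Nat.factorial_pos m).ne'
    rw [Nat.factorial_succ, pow_succ]
    push_cast
    field_simp
  exact heq ▸ (Real.summable_pow_div_factorial s).mul_left s

lemma tsum_mul_pow_div_factorial (s : ℝ) :
    ∑' m : ℕ, (m : ℝ) * (s ^ m / (m.factorial : ℝ)) = s * Real.exp s := by
  rw [Summable.tsum_eq_zero_add (summable_mul_pow_div_factorial s)]
  have heq : ∀ m : ℕ, ((m + 1 : ℕ) : ℝ) * (s ^ (m + 1) / ((m + 1).factorial : ℝ))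
      = s * (s ^ m / (m.factorial : ℝ)) := by
    intro m
    have hfac : ((m.factorial : ℝ)) ≠ 0 := by
      exact_mod_cast (Nat.factorial_pos m).ne'
    rw [Nat.factorial_succ, pow_succ]
    push_cast
    field_simp
  rw [tsum_congr heq, tsum_mul_left, tsum_exp_series]
  simp

lemma srw_mass (s : ℝ) (hs : 0 ≤ s) :
    Summable (fun x : ℤ => srwKernel s x) ∧ ∑' x : ℤ, srwKernel s x = 1 := by
  have hb : Summable fun m : ℕ => s ^ m / (m.factorial : ℝ) / 2 ^ m * bsum m (fun _ => 1) := by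
    have heq : (fun m : ℕ => s ^ m / (m.factorial : ℝ) / 2 ^ m * bsum m (fun _ => 1))
        = fun m : ℕ => s ^ m / (m.factorial : ℝ) := by
      funext m
      rw [bsum_one]
      field_simp
    exact heq ▸ Real.summable_pow_div_factorial s
  obtain ⟨h1, h2⟩ := srw_fubini s hs (fun _ => 1) (fun _ => zero_le_one) hb
  constructor
  · simpa using h1
  · have h3 : ∑' x : ℤ, srwKernel s x = ∑' x : ℤ, srwKernel s x * 1 := by simp
    rw [h3, h2]
    have h4 : ∀ m : ℕ, s ^ m / (m.factorial : ℝ) / 2 ^ m * bsum m (fun _ => 1)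
        = s ^ m / (m.factorial : ℝ) := by
      intro m
      rw [bsum_one]
      field_simp
    rw [tsum_congr h4, tsum_exp_series, ← Real.exp_add]
    simp

lemma srw_moment2 (s : ℝ) (hs : 0 ≤ s) :
    Summable (fun x : ℤ => srwKernel s x * ((x : ℝ)) ^ 2) ∧
    ∑' x : ℤ, srwKernel s x * ((x : ℝ)) ^ 2 = s := by
  have heq : ∀ m : ℕ, s ^ m / (m.factorial : ℝ) / 2 ^ m * bsum m (fun x : ℤ => ((x : ℝ)) ^ 2)
      = (m : ℝ) * (s ^ m / (m.factorial : ℝ)) := by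
    intro m
    rw [bsum_sq]
    field_simp
  have hb : Summable fun m : ℕ =>
      s ^ m / (m.factorial : ℝ) / 2 ^ m * bsum m (fun x : ℤ => ((x : ℝ)) ^ 2) :=
    (funext heq : _) ▸ summable_mul_pow_div_factorial s
  obtain ⟨h1, h2⟩ := srw_fubini s hs (fun x : ℤ => ((x : ℝ)) ^ 2) (fun x => sq_nonneg _) hb
  refine ⟨h1, ?_⟩
  rw [h2, tsum_congr heq, tsum_mul_pow_div_factorial]
  rw [← mul_assoc, mul_comm (Real.exp (-s)) s, mul_assoc, ← Real.exp_add]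
  simp

lemma srw_weighted (s : ℝ) (hs : 0 ≤ s) (g : ℤ → ℝ) (hg0 : ∀ x, 0 ≤ g x)
    (hg1 : ∀ x, g x ≤ 1) :
    Summable (fun x : ℤ => srwKernel s x * g x) := by
  have hb : Summable fun m : ℕ => s ^ m / (m.factorial : ℝ) / 2 ^ m * bsum m g := by
    apply Summable.of_nonneg_of_le
      (fun m => mul_nonneg (by positivity) (bsum_nonneg m hg0))
      (fun m => ?_) (Real.summable_pow_div_factorial s)
    calc s ^ m / (m.factorial : ℝ) / 2 ^ m * bsum m g
        ≤ s ^ m / (m.factorial : ℝ) / 2 ^ m * 2 ^ m :=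
          mul_le_mul_of_nonneg_left (bsum_le_two_pow m hg1) (by positivity)
      _ = s ^ m / (m.factorial : ℝ) := by field_simp
  exact (srw_fubini s hs g hg0 hb).1

lemma srw_nonneg (s : ℝ) (hs : 0 ≤ s) (x : ℤ) : 0 ≤ srwKernel s x := by
  unfold srwKernel
  apply mul_nonneg (Real.exp_nonneg _)
  apply tsum_nonneg
  intro m
  positivity

/-- Uniform lower bound under diffusive rescaling: for `λ ≥ 0` and `T > 0` there is
`c(λ,T) > 0` with `E[exp(-λ|X_{n²t}+k|/n)] ≥ c(λ,T) exp(-λ|k|/n)` for all `n ≥ 1`, `k ∈ ℤ`,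
`t ∈ [0,T]`. -/
theorem srw_rescaled_exp_lower_bound (lam T : ℝ) (hlam : 0 ≤ lam) (hT : 0 < T) :
    ∃ c : ℝ, 0 < c ∧ ∀ n : ℕ, 0 < n → ∀ k : ℤ, ∀ t ∈ Icc (0 : ℝ) T,
      c * Real.exp (-lam * |(k : ℝ)| / n)
        ≤ ∑' x : ℤ, srwKernel ((n : ℝ) ^ 2 * t) x * Real.exp (-lam * |(x : ℝ) + (k : ℝ)| / n) := by
  set M : ℝ := Real.sqrt (2 * T) with hMdef
  have hM : 0 < M := Real.sqrt_pos.mpr (by linarith)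
  have hM2 : M ^ 2 = 2 * T := Real.sq_sqrt (by linarith)
  refine ⟨Real.exp (-lam * M) / 2, by positivity, ?_⟩
  intro n hn k t ht
  have hn' : (0 : ℝ) < n := by exact_mod_cast hn
  set s : ℝ := (n : ℝ) ^ 2 * t with hsdef
  have hs : 0 ≤ s := mul_nonneg (by positivity) ht.1
  have hsT : s ≤ (n : ℝ) ^ 2 * T := by
    apply mul_le_mul_of_nonneg_left ht.2 (by positivity)
  set P : ℤ → ℝ := fun x => srwKernel s x with hPdef
  have hP0 : ∀ x, 0 ≤ P x := fun x => srw_nonneg s hs x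
  set w : ℤ → ℝ := fun x => Real.exp (-lam * |(x : ℝ) + (k : ℝ)| / n) with hwdef
  set v : ℤ → ℝ := fun x => Real.exp (-lam * |(x : ℝ)| / n) with hvdef
  have hexp_le_one : ∀ a : ℝ, 0 ≤ a → Real.exp (-lam * a / n) ≤ 1 := by
    intro a ha
    apply Real.exp_le_one_iff.mpr
    apply div_nonpos_of_nonpos_of_nonneg _ hn'.le
    nlinarith
  have hw0 : ∀ x, 0 ≤ w x := fun x => (Real.exp_pos _).le
  have hw1 : ∀ x, w x ≤ 1 := fun x => hexp_le_one _ (abs_nonneg _)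
  have hv0 : ∀ x, 0 ≤ v x := fun x => (Real.exp_pos _).le
  have hv1 : ∀ x, v x ≤ 1 := fun x => hexp_le_one _ (abs_nonneg _)
  have hPw : Summable fun x => P x * w x := srw_weighted s hs w hw0 hw1
  have hPv : Summable fun x => P x * v x := srw_weighted s hs v hv0 hv1
  have hPsum : Summable P := (srw_mass s hs).1
  have hPone : ∑' x, P x = 1 := (srw_mass s hs).2
  have hP2 := srw_moment2 s hs
  -- Step A : triangle inequality
  have stepA : Real.exp (-lam * |(k : ℝ)| / n) * ∑' x, P x * v x ≤ ∑' x, P x * w x := by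
    rw [← tsum_mul_left]
    apply Summable.tsum_le_tsum _ (hPv.mul_left _) hPw
    intro x
    rw [hwdef, hvdef]
    have h1 : Real.exp (-lam * |(k : ℝ)| / n) * (P x * Real.exp (-lam * |(x : ℝ)| / n))
        = P x * Real.exp (-lam * |(k : ℝ)| / n + -lam * |(x : ℝ)| / n) := by
      rw [Real.exp_add]; ring
    rw [h1]
    apply mul_le_mul_of_nonneg_left _ (hP0 x)
    apply Real.exp_le_exp.mpr
    rw [← add_div, div_le_div_iff₀ hn' hn']
    have habs : |(x : ℝ) + (k : ℝ)| ≤ |(x : ℝ)| + |(k : ℝ)| := abs_add_le _ _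
    nlinarith [mul_le_mul_of_nonneg_left habs hlam]
  -- Step B : Chebyshev
  set χ : ℤ → ℝ := fun x => if |(x : ℝ)| ≤ M * n then (1 : ℝ) else 0 with hχdef
  have hχ0 : ∀ x, 0 ≤ χ x := by
    intro x; rw [hχdef]; dsimp only; split <;> norm_num
  have hχ1 : ∀ x, χ x ≤ 1 := by
    intro x; rw [hχdef]; dsimp only; split <;> norm_num
  have hPχ : Summable fun x => P x * χ x := srw_weighted s hs χ hχ0 hχ1
  have hPq : Summable fun x => P x * ((x : ℝ) ^ 2 / (M * n) ^ 2) := by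
    have heq : (fun x : ℤ => P x * ((x : ℝ) ^ 2 / (M * n) ^ 2))
        = fun x : ℤ => (P x * (x : ℝ) ^ 2) * ((M * n) ^ 2)⁻¹ := by
      funext x; ring
    rw [heq]
    exact hP2.1.mul_right _
  have htsumq : ∑' x, P x * ((x : ℝ) ^ 2 / (M * n) ^ 2) = s / (M * n) ^ 2 := by
    have heq : (fun x : ℤ => P x * ((x : ℝ) ^ 2 / (M * n) ^ 2))
        = fun x : ℤ => (P x * (x : ℝ) ^ 2) * ((M * n) ^ 2)⁻¹ := by
      funext x; ring
    rw [heq, tsum_mul_right, hP2.2, div_eq_mul_inv]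
  have hchebyshev : (1 : ℝ) / 2 ≤ ∑' x, P x * χ x := by
    have hpt : ∀ x : ℤ, P x - P x * ((x : ℝ) ^ 2 / (M * n) ^ 2) ≤ P x * χ x := by
      intro x
      rw [hχdef]
      dsimp only
      split
      · next h =>
          have : 0 ≤ P x * ((x : ℝ) ^ 2 / (M * n) ^ 2) :=
            mul_nonneg (hP0 x) (by positivity)
          nlinarith [hP0 x]
      · next h =>
          push_neg at h
          have hx2 : (M * n) ^ 2 ≤ (x : ℝ) ^ 2 := by
            have := sq_abs ((x : ℝ))
            nlinarith [abs_nonneg ((x : ℝ)), mul_pos hM hn']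
          have h1 : (1 : ℝ) ≤ (x : ℝ) ^ 2 / (M * n) ^ 2 := by
            rw [le_div_iff₀ (by positivity)]
            linarith
          have := mul_le_mul_of_nonneg_left h1 (hP0 x)
          simpa using this
    have hsub : ∑' x, (P x - P x * ((x : ℝ) ^ 2 / (M * n) ^ 2))
        = 1 - s / (M * n) ^ 2 := by
      rw [Summable.tsum_sub hPsum hPq, hPone, htsumq]
    have hle : ∑' x, (P x - P x * ((x : ℝ) ^ 2 / (M * n) ^ 2)) ≤ ∑' x, P x * χ x :=
      Summable.tsum_le_tsum hpt (hPsum.sub hPq) hPχ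
    rw [hsub] at hle
    have hfrac : s / (M * n) ^ 2 ≤ 1 / 2 := by
      rw [div_le_div_iff₀ (by positivity) (by norm_num)]
      have : (M * n) ^ 2 = 2 * T * (n : ℝ) ^ 2 := by
        rw [mul_pow, hM2]
      rw [this]
      nlinarith
    linarith
  have stepB : Real.exp (-lam * M) * (1 / 2) ≤ ∑' x, P x * v x := by
    have hpt : ∀ x : ℤ, P x * (Real.exp (-lam * M) * χ x) ≤ P x * v x := by
      intro x
      apply mul_le_mul_of_nonneg_left _ (hP0 x)
      rw [hχdef, hvdef]
      dsimp only
      split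
      · next h =>
          rw [mul_one]
          apply Real.exp_le_exp.mpr
          rw [neg_mul, neg_mul, neg_div, neg_le_neg_iff, div_le_iff₀ hn']
          nlinarith [mul_le_mul_of_nonneg_left h hlam]
      · next h =>
          rw [mul_zero]
          exact (Real.exp_pos _).le
    have h1 : ∑' x, P x * (Real.exp (-lam * M) * χ x)
        = Real.exp (-lam * M) * ∑' x, P x * χ x := by
      rw [← tsum_mul_left]
      apply tsum_congr
      intro x
      ring
    have h2 : Summable fun x => P x * (Real.exp (-lam * M) * χ x) := by
      have heq : (fun x : ℤ => P x * (Real.exp (-lam * M) * χ x))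
          = fun x : ℤ => Real.exp (-lam * M) * (P x * χ x) := by
        funext x; ring
      rw [heq]
      exact hPχ.mul_left _
    have hle := Summable.tsum_le_tsum hpt h2 hPv
    rw [h1] at hle
    calc Real.exp (-lam * M) * (1 / 2)
        ≤ Real.exp (-lam * M) * ∑' x, P x * χ x :=
          mul_le_mul_of_nonneg_left hchebyshev (Real.exp_nonneg _)
      _ ≤ ∑' x, P x * v x := hle
  calc Real.exp (-lam * M) / 2 * Real.exp (-lam * |(k : ℝ)| / n)
      = Real.exp (-lam * |(k : ℝ)| / n) * (Real.exp (-lam * M) * (1 / 2)) := by ring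
    _ ≤ Real.exp (-lam * |(k : ℝ)| / n) * ∑' x, P x * v x :=
        mul_le_mul_of_nonneg_left stepB (Real.exp_nonneg _)
    _ ≤ ∑' x, P x * w x := stepA
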